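/- arXiv:2305.00055 — 2 statements merged into one kernel-verified Lean document; each statement's English description precedes it below -/
import Mathlib

section
/- Let 0<p<∞ and φ∈𝒢_p with φ(1)=1. Assume φ(t) ∼ t^{n/p} for t>1, i.e. there exist constants 0<c_1≤c_2 with c_1 t^{n/p} ≤ φ(t) ≤ c_2 t^{n/p} for all t>1. Then there exists c>0 such that 𝔈_G ℳ_{φ,p}(ℝ^n)(t) ≤ c · t^{-1/p} for all t>0. -/
open MeasureTheory Filter Set ENNReal

noncomputable section

abbrev En (n : ℕ) := EuclideanSpace ℝ (Fin n)

/-- The class `𝒢_p`: nondecreasing positive functions on `(0,∞)` such that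
`t ↦ φ(t) t^{-n/p}` is nonincreasing. -/
def GClass (n : ℕ) (p : ℝ) (φ : ℝ → ℝ) : Prop :=
  (∀ t : ℝ, 0 < t → 0 < φ t) ∧
    ∀ t r : ℝ, 0 < t → t ≤ r → φ t ≤ φ r ∧ φ r ≤ φ t * (r / t) ^ ((n : ℝ) / p)

/-- The axis-parallel compact cube centred at `x` with side length `r`. -/
def cube (n : ℕ) (x : En n) (r : ℝ) : Set (En n) := {y | ∀ i, |y i - x i| ≤ r / 2}

/-- The generalised Morrey quasi-norm `‖f | ℳ_{φ,p}(ℝⁿ)‖`. -/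
def morreyNorm {F : Type*} [NormedAddCommGroup F] (n : ℕ) (p : ℝ) (φ : ℝ → ℝ)
    (f : En n → F) : ℝ≥0∞ :=
  ⨆ (x : En n) (r : ℝ) (_ : 0 < r),
    ENNReal.ofReal (φ r) *
      ((volume (cube n x r))⁻¹ *
        ∫⁻ y in cube n x r, ENNReal.ofReal (‖f y‖ ^ p)) ^ (1 / p)

/-- The decreasing rearrangement `f*(t) = inf{σ>0 : |{x : |f(x)|>σ}| ≤ t}`. -/
def rearr {F : Type*} [NormedAddCommGroup F] (n : ℕ) (f : En n → F) (t : ℝ) : ℝ≥0∞ :=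
  sInf {σ : ℝ≥0∞ | 0 < σ ∧ volume {x : En n | σ < ENNReal.ofReal ‖f x‖} ≤ ENNReal.ofReal t}

/-- The growth envelope function of the generalised Morrey space `ℳ_{φ,p}(ℝⁿ)`. -/
def morreyEnvelope (n : ℕ) (p : ℝ) (φ : ℝ → ℝ) (t : ℝ) : ℝ≥0∞ :=
  ⨆ (f : En n → ℝ) (_ : Measurable f) (_ : morreyNorm n p φ f ≤ 1), rearr n f t

end

lemma cube_eq (n : ℕ) (x : En n) (r : ℝ) :
    cube n x r = ((MeasurableEquiv.toLp 2 (Fin n → ℝ)).symm) ⁻¹'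
      (univ.pi fun i => Icc (x i - r/2) (x i + r/2)) := by
  ext y
  simp only [cube, mem_setOf_eq, mem_preimage, Set.mem_pi, mem_univ, forall_true_left,
    mem_Icc, abs_sub_le_iff]
  refine forall_congr' fun i => ?_
  have : ((MeasurableEquiv.toLp 2 (Fin n → ℝ)).symm) y i = y i := rfl
  rw [this]
  constructor
  · rintro ⟨h1, h2⟩; constructor <;> linarith
  · rintro ⟨h1, h2⟩; constructor <;> linarith

lemma cube_volume (n : ℕ) (x : En n) (r : ℝ) (hr : 0 ≤ r) :
    volume (cube n x r) = ENNReal.ofReal r ^ n := by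
  rw [cube_eq, (EuclideanSpace.volume_preserving_symm_measurableEquiv_toLp (Fin n)).measure_preimage
    (by measurability)]
  rw [volume_pi_pi]
  simp [Real.volume_Icc]

lemma cube_measurable (n : ℕ) (x : En n) (r : ℝ) : MeasurableSet (cube n x r) := by
  rw [cube_eq]
  exact ((MeasurableEquiv.toLp 2 (Fin n → ℝ)).symm).measurable (by measurability)

/-- If `φ(t) ∼ t^{n/p}` for `t>1`, then the growth envelope function of
`ℳ_{φ,p}(ℝⁿ)` is bounded by `c t^{-1/p}` for all `t>0`. -/
theorem statement1 (n : ℕ) (hn : 0 < n) (p : ℝ) (hp : 0 < p) (φ : ℝ → ℝ)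
    (hφ : GClass n p φ) (hφ1 : φ 1 = 1)
    (hsim : ∃ c₁ c₂ : ℝ, 0 < c₁ ∧ c₁ ≤ c₂ ∧ ∀ t : ℝ, 1 < t →
      c₁ * t ^ ((n : ℝ) / p) ≤ φ t ∧ φ t ≤ c₂ * t ^ ((n : ℝ) / p)) :
    ∃ c : ℝ, 0 < c ∧ ∀ t : ℝ, 0 < t →
      morreyEnvelope n p φ t ≤ ENNReal.ofReal (c * t ^ (-(1 / p))) := by
  obtain ⟨c₁, c₂, hc₁, hc₁₂, hsim⟩ := hsim
  set c' : ℝ := max c₁⁻¹ 1 with hc'def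
  have hc'pos : 0 < c' := lt_of_lt_of_le one_pos (le_max_right _ _)
  refine ⟨c', hc'pos, fun t ht => ?_⟩
  rw [morreyEnvelope]
  refine iSup_le fun f => iSup_le fun hf => iSup_le fun hnorm => ?_
  set s : ℝ := c' * t ^ (-(1 / p)) with hsdef
  have hts : 0 < t ^ (-(1 / p)) := Real.rpow_pos_of_pos ht _
  have hs : 0 < s := mul_pos hc'pos hts
  set σ : ℝ≥0∞ := ENNReal.ofReal s with hσdef
  set C : ℝ := c₁⁻¹ ^ p with hCdef
  have hC : 0 < C := Real.rpow_pos_of_pos (inv_pos.2 hc₁) _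
  -- Step 1: uniform integral bound on big cubes
  have key : ∀ (x : En n) (r : ℝ), 1 < r →
      (∫⁻ y in cube n x r, ENNReal.ofReal (‖f y‖ ^ p)) ≤ ENNReal.ofReal C := by
    intro x r hr
    have hr0 : 0 < r := lt_trans one_pos hr
    have hφr : 0 < φ r := hφ.1 r hr0
    set I := ∫⁻ y in cube n x r, ENNReal.ofReal (‖f y‖ ^ p) with hI
    set V := volume (cube n x r) with hVdef
    have hV : V = ENNReal.ofReal r ^ n := cube_volume n x r hr0.le
    have hV0 : V ≠ 0 := by
      rw [hV]; exact pow_ne_zero _ (ENNReal.ofReal_pos.2 hr0).ne'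
    have hVtop : V ≠ ⊤ := by rw [hV]; exact ENNReal.pow_ne_top ENNReal.ofReal_ne_top
    have hterm : ENNReal.ofReal (φ r) * (V⁻¹ * I) ^ (1 / p) ≤ 1 := by
      refine le_trans ?_ hnorm
      rw [morreyNorm]
      exact le_iSup_of_le x (le_iSup_of_le r (le_iSup_of_le hr0 le_rfl))
    have ha0 : ENNReal.ofReal (φ r) ≠ 0 := (ENNReal.ofReal_pos.2 hφr).ne'
    have hb : (V⁻¹ * I) ^ (1 / p) ≤ (ENNReal.ofReal (φ r))⁻¹ := by
      rw [ENNReal.le_inv_iff_mul_le, mul_comm]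
      exact hterm
    have hb2 : V⁻¹ * I ≤ ((ENNReal.ofReal (φ r))⁻¹) ^ p := by
      have := ENNReal.rpow_le_rpow hb hp.le
      rwa [← ENNReal.rpow_mul, one_div, inv_mul_cancel₀ hp.ne', ENNReal.rpow_one] at this
    have hI_le : I ≤ V * ((ENNReal.ofReal (φ r))⁻¹) ^ p := by
      have h1 : I = V * (V⁻¹ * I) := by
        rw [← mul_assoc, ENNReal.mul_inv_cancel hV0 hVtop, one_mul]
      rw [h1]; exact mul_le_mul_right hb2 V
    have hrw : V * ((ENNReal.ofReal (φ r))⁻¹) ^ p = ENNReal.ofReal (r ^ n / φ r ^ p) := by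
      rw [ENNReal.inv_rpow, ENNReal.ofReal_rpow_of_pos hφr, hV,
        ← ENNReal.ofReal_pow hr0.le, div_eq_mul_inv,
        ENNReal.ofReal_mul (by positivity)]
      congr 1
      rw [← ENNReal.ofReal_inv_of_pos (Real.rpow_pos_of_pos hφr p)]
    refine le_trans hI_le (le_trans (le_of_eq hrw) (ENNReal.ofReal_le_ofReal ?_))
    -- real inequality:  r^n / φ r ^ p ≤ c₁⁻¹ ^ p
    have h1 : c₁ * r ^ ((n : ℝ) / p) ≤ φ r := (hsim r hr).1
    have h2 : c₁ ^ p * r ^ (n : ℕ) ≤ φ r ^ p := by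
      have h3 : (c₁ * r ^ ((n : ℝ) / p)) ^ p ≤ φ r ^ p :=
        Real.rpow_le_rpow (by positivity) h1 hp.le
      calc c₁ ^ p * r ^ (n : ℕ)
          = (c₁ * r ^ ((n : ℝ) / p)) ^ p := by
            rw [Real.mul_rpow hc₁.le (by positivity), ← Real.rpow_natCast r n,
              ← Real.rpow_mul hr0.le, div_mul_cancel₀ _ hp.ne']
        _ ≤ φ r ^ p := h3
    have hcp : 0 < c₁ ^ p := Real.rpow_pos_of_pos hc₁ p
    have hrn : 0 < r ^ (n : ℕ) := by positivity
    calc r ^ (n : ℕ) / φ r ^ p ≤ r ^ (n : ℕ) / (c₁ ^ p * r ^ (n : ℕ)) :=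
          div_le_div_of_nonneg_left hrn.le (mul_pos hcp hrn) h2
      _ = c₁⁻¹ ^ p := by
          rw [Real.inv_rpow hc₁.le]
          field_simp
  -- Step 2: Chebyshev on big cubes
  set A : Set (En n) := {x : En n | σ < ENNReal.ofReal ‖f x‖} with hAdef
  have hAm : MeasurableSet A :=
    measurableSet_lt measurable_const (ENNReal.measurable_ofReal.comp hf.norm)
  have hsp_eq : s ^ p = c' ^ p * t⁻¹ := by
    rw [hsdef, Real.mul_rpow hc'pos.le hts.le]
    congr 1
    rw [← Real.rpow_mul ht.le]
    rw [show (-(1 / p)) * p = -1 by field_simp]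
    exact Real.rpow_neg_one t
  have hCst : C / s ^ p ≤ t := by
    rw [hsp_eq, div_le_iff₀ (by positivity)]
    rw [show t * (c' ^ p * t⁻¹) = c' ^ p by field_simp]
    exact Real.rpow_le_rpow (inv_nonneg.2 hc₁.le) (le_max_left _ _) hp.le
  have hσp_eq : σ ^ p = ENNReal.ofReal (s ^ p) := ENNReal.ofReal_rpow_of_pos hs
  have hσp0 : σ ^ p ≠ 0 := by rw [hσp_eq]; exact (ENNReal.ofReal_pos.2 (by positivity)).ne'
  have hσptop : σ ^ p ≠ ⊤ := by rw [hσp_eq]; exact ENNReal.ofReal_ne_top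
  have hg : Measurable fun y : En n => ENNReal.ofReal (‖f y‖ ^ p) :=
    ENNReal.measurable_ofReal.comp (hf.norm.pow measurable_const)
  have cheb : ∀ k : ℕ, volume (A ∩ cube n 0 ((k : ℝ) + 2)) ≤ ENNReal.ofReal t := by
    intro k
    have hk1 : (1 : ℝ) < (k : ℝ) + 2 := by
      have : (0:ℝ) ≤ (k:ℝ) := Nat.cast_nonneg k
      linarith
    set Q := cube n 0 ((k : ℝ) + 2) with hQ
    have hBm : MeasurableSet {y : En n | σ ^ p ≤ ENNReal.ofReal (‖f y‖ ^ p)} :=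
      measurableSet_le measurable_const hg
    have hsub : A ⊆ {y : En n | σ ^ p ≤ ENNReal.ofReal (‖f y‖ ^ p)} := by
      intro y hy
      have h1 : σ ^ p ≤ (ENNReal.ofReal ‖f y‖) ^ p := ENNReal.rpow_le_rpow (le_of_lt hy) hp.le
      rwa [ENNReal.ofReal_rpow_of_nonneg (norm_nonneg _) hp.le] at h1
    have hcb := mul_meas_ge_le_lintegral₀ (μ := volume.restrict Q) hg.aemeasurable (σ ^ p)
    rw [Measure.restrict_apply hBm] at hcb
    have step : σ ^ p * volume (A ∩ Q) ≤ ENNReal.ofReal C := by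
      calc σ ^ p * volume (A ∩ Q)
          ≤ σ ^ p * volume ({y : En n | σ ^ p ≤ ENNReal.ofReal (‖f y‖ ^ p)} ∩ Q) :=
            mul_le_mul_right (measure_mono (inter_subset_inter_left Q hsub)) _
        _ ≤ ∫⁻ y in Q, ENNReal.ofReal (‖f y‖ ^ p) := hcb
        _ ≤ ENNReal.ofReal C := key 0 _ hk1
    have hdiv : volume (A ∩ Q) ≤ ENNReal.ofReal C / σ ^ p :=
      (ENNReal.le_div_iff_mul_le (Or.inl hσp0) (Or.inl hσptop)).2 (by rwa [mul_comm])
    refine le_trans hdiv ?_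
    rw [hσp_eq, ← ENNReal.ofReal_div_of_pos (by positivity)]
    exact ENNReal.ofReal_le_ofReal hCst
  have cube_mono : ∀ (x : En n) (r r' : ℝ), r ≤ r' → cube n x r ⊆ cube n x r' := by
    intro x r r' h y hy i
    exact (hy i).trans (by linarith)
  have hAU : A = ⋃ k : ℕ, A ∩ cube n 0 ((k : ℝ) + 2) := by
    apply subset_antisymm
    · intro y hy
      obtain ⟨M, hM⟩ := Finset.exists_le (Finset.univ.image fun i : Fin n => |y i - (0 : En n) i|)
      obtain ⟨k, hk⟩ := exists_nat_ge (2 * M)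
      refine mem_iUnion.2 ⟨k, hy, fun i => ?_⟩
      have h1 : |y i - (0 : En n) i| ≤ M :=
        hM _ (Finset.mem_image_of_mem _ (Finset.mem_univ i))
      have h2 : (0 : ℝ) ≤ |y i - (0 : En n) i| := abs_nonneg _
      have : |y i - (0 : En n) i| ≤ ((k : ℝ) + 2) / 2 := by linarith
      exact this
    · exact iUnion_subset fun k => inter_subset_left
  have hdir : Directed (· ⊆ ·) fun k : ℕ => A ∩ cube n 0 ((k : ℝ) + 2) := by
    intro j k
    refine ⟨max j k, inter_subset_inter_right _ (cube_mono _ _ _ (by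
      push_cast; exact add_le_add_left (by exact_mod_cast le_max_left j k) 2)),
      inter_subset_inter_right _ (cube_mono _ _ _ (by
      push_cast; exact add_le_add_left (by exact_mod_cast le_max_right j k) 2))⟩
  have hvolA : volume A ≤ ENNReal.ofReal t := by
    rw [hAdef] at hAU ⊢
    rw [hAU, Directed.measure_iUnion hdir]
    exact iSup_le cheb
  have hfinal : rearr n f t ≤ σ := by
    rw [rearr]
    exact sInf_le ⟨ENNReal.ofReal_pos.2 hs, hvolA⟩
  exact hfinal
end

section
/- Let 0<p<∞ and φ∈𝒢_p with φ(1)=1 and lim_{t→0+} φ(t)=0. If lim_{t→∞} t^{-n/p} φ(t) = 0, then 𝔈_G ℳ_{φ,p}(ℝ^n)(t) = ∞ for every t>0. -/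
open MeasureTheory Filter Set ENNReal

lemma cube_closed (n : ℕ) (x : En n) (r : ℝ) : IsClosed (cube n x r) := by
  have : cube n x r = ⋂ i, {y : En n | |y i - x i| ≤ r/2} := by
    ext y; simp [cube, Set.mem_iInter]
  rw [this]
  exact isClosed_iInter fun i =>
    isClosed_le (((EuclideanSpace.proj (𝕜 := ℝ) i).continuous.sub continuous_const).abs)
      continuous_const

lemma cube_eq_preimage (n : ℕ) (x : En n) (r : ℝ) :
    cube n x r = ((MeasurableEquiv.toLp 2 (Fin n → ℝ)).symm) ⁻¹'
      (Set.univ.pi fun i => Icc (x i - r/2) (x i + r/2)) := by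
  ext y
  have he : ∀ i, ((MeasurableEquiv.toLp 2 (Fin n → ℝ)).symm) y i = y i := fun _ => rfl
  simp only [cube, Set.mem_preimage, Set.mem_pi, Set.mem_univ, forall_true_left, Set.mem_setOf_eq,
    Set.mem_Icc, he]
  constructor
  · intro h i
    have := abs_le.mp (h i)
    constructor <;> [linarith [this.1]; linarith [this.2]]
  · intro h i
    rw [abs_le]
    constructor <;> [linarith [(h i).1]; linarith [(h i).2]]

lemma volume_cube (n : ℕ) (x : En n) (r : ℝ) :
    volume (cube n x r) = ENNReal.ofReal r ^ n := by
  rw [cube_eq_preimage,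
    (EuclideanSpace.volume_preserving_symm_measurableEquiv_toLp (Fin n)).measure_preimage
      ((MeasurableSet.univ_pi fun i => measurableSet_Icc).nullMeasurableSet)]
  rw [volume_pi_pi]
  simp only [Real.volume_Icc]
  have : ∀ i : Fin n, ENNReal.ofReal (x i + r/2 - (x i - r/2)) = ENNReal.ofReal r := by
    intro i; congr 1; ring
  rw [Finset.prod_congr rfl (fun i _ => this i)]
  simp


set_option maxHeartbeats 2000000 in
/-- If `lim_{t→0⁺} φ(t)=0` and `lim_{t→∞} t^{-n/p} φ(t) = 0`, then the
growth envelope function of `ℳ_{φ,p}(ℝⁿ)` is identically `∞` on `(0,∞)`. -/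
theorem statement4 (n : ℕ) (hn : 0 < n) (p : ℝ) (hp : 0 < p) (φ : ℝ → ℝ)
    (hφ : GClass n p φ) (hφ1 : φ 1 = 1)
    (hφ0 : Filter.Tendsto φ (nhdsWithin 0 (Set.Ioi 0)) (nhds 0))
    (hinf : Filter.Tendsto (fun t : ℝ => φ t / t ^ ((n : ℝ) / p)) Filter.atTop (nhds 0)) :
    ∀ t : ℝ, 0 < t → morreyEnvelope n p φ t = ⊤ := by
  intro t ht
  classical
  -- main claim: for every M ≥ 1, ofReal M ≤ envelope
  have key : ∀ M : ℝ, 1 ≤ M → ENNReal.ofReal M ≤ morreyEnvelope n p φ t := by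
    intro M hM1
    have hM : (0:ℝ) < M := lt_of_lt_of_le one_pos hM1
    have hMp : (0:ℝ) < M ^ p := Real.rpow_pos_of_pos hM p
    -- choose δ
    have hε : (0:ℝ) < (1/(3 * M^p)) ^ (1/p) := by positivity
    obtain ⟨δ, hδmem⟩ : ∃ δ : ℝ, δ ∈ Set.Ioi (0:ℝ) ∧ δ ≤ 1 ∧ φ δ < (1/(3 * M^p)) ^ (1/p) := by
      have h1 : ∀ᶠ s in nhdsWithin (0:ℝ) (Set.Ioi 0), φ s < (1/(3 * M^p)) ^ (1/p) :=
        hφ0.eventually_lt_const hε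
      have h2 : ∀ᶠ s in nhdsWithin (0:ℝ) (Set.Ioi 0), s ≤ 1 := by
        filter_upwards [Ioc_mem_nhdsGT_of_mem (Set.mem_Ico.mpr ⟨le_refl (0:ℝ), one_pos⟩)]
          with s hs using hs.2
      exact ((eventually_mem_nhdsWithin.and (h2.and h1)).exists).imp
        (fun δ h => ⟨h.1, h.2.1, h.2.2⟩)
    obtain ⟨hδ0', hδ1, hδφ⟩ := hδmem
    have hδ0 : (0:ℝ) < δ := hδ0'
    have hφδ0 : (0:ℝ) < φ δ := hφ.1 δ hδ0
    -- (φ δ)^p ≤ 1/(3 M^p)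
    have hδp : (φ δ) ^ p ≤ 1 / (3 * M^p) := by
      have h1 : (φ δ) ^ p ≤ ((1/(3 * M^p)) ^ (1/p)) ^ p :=
        Real.rpow_le_rpow hφδ0.le hδφ.le hp.le
      have h2 : ((1/(3 * M^p)) ^ (1/p) : ℝ) ^ p = 1/(3 * M^p) := by
        rw [← Real.rpow_mul (by positivity), one_div_mul_cancel hp.ne', Real.rpow_one]
      linarith [h1, h2.le]
    -- choose N
    set N : ℕ := ⌈t / δ^n⌉₊ + 1 with hNdef
    have hN0 : (0:ℝ) < N := by positivity
    have htN : t < N * δ^n := by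
      have h1 : t / δ^n ≤ ⌈t / δ^n⌉₊ := Nat.le_ceil _
      have h2 : (⌈t / δ^n⌉₊ : ℝ) < N := by
        rw [hNdef]; push_cast; linarith
      have hδn : (0:ℝ) < δ^n := by positivity
      calc t = (t / δ^n) * δ^n := by field_simp
        _ ≤ (⌈t / δ^n⌉₊ : ℝ) * δ^n := by gcongr
        _ < N * δ^n := by gcongr
    -- choose R
    have hε₂ : (0:ℝ) < ((M^p * N * δ^n)⁻¹) ^ (1/p) := by positivity
    obtain ⟨R, hR⟩ : ∃ R : ℝ, ∀ r ≥ R, φ r / r ^ ((n:ℝ)/p) < ((M^p * N * δ^n)⁻¹) ^ (1/p) := by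
      have := (hinf.eventually_lt_const hε₂)
      rw [Filter.eventually_atTop] at this
      exact this
    set D : ℝ := max (max R 1) (3*δ) with hDdef
    have hD0 : (0:ℝ) < D := lt_of_lt_of_le (by positivity : (0:ℝ) < 3*δ) (le_max_right _ _)
    have hD3δ : 3*δ ≤ D := le_max_right _ _
    have hDR : R ≤ D := le_trans (le_max_left _ _) (le_max_left _ _)
    have hδD : δ ≤ D := by linarith
    -- the function
    set i0 : Fin n := ⟨0, hn⟩ with hi0
    set c : ℕ → En n := fun j => WithLp.toLp 2 (fun i => if i = i0 then (j:ℝ)*D else 0) with hc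
    set S : Set (En n) := ⋃ j ∈ Finset.range N, cube n (c j) δ with hS
    have hSm : MeasurableSet S := by
      exact Finset.measurableSet_biUnion _ (fun j _ => (cube_closed n (c j) δ).measurableSet)
    set f : En n → ℝ := S.indicator (fun _ => M) with hfdef
    have hf : Measurable f := measurable_const.indicator hSm
    have hci0 : ∀ j : ℕ, c j i0 = (j:ℝ)*D := fun j => (if_pos rfl : (if i0 = i0 then (j:ℝ)*D else 0) = (j:ℝ)*D)
    -- cubes are pairwise disjoint
    have hdisj : (↑(Finset.range N) : Set ℕ).PairwiseDisjoint (fun j => cube n (c j) δ) := by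
      intro i _ j _ hij
      rw [Function.onFun, Set.disjoint_left]
      intro y hyi hyj
      have h1 : |y i0 - (i:ℝ)*D| ≤ δ/2 := by have := hyi i0; rwa [hci0] at this
      have h2 : |y i0 - (j:ℝ)*D| ≤ δ/2 := by have := hyj i0; rwa [hci0] at this
      have h3 : |(i:ℝ)*D - (j:ℝ)*D| ≤ δ := by
        have := abs_sub_le ((i:ℝ)*D) (y i0) ((j:ℝ)*D)
        rw [abs_sub_comm ((i:ℝ)*D) (y i0)] at this
        linarith
      have h4 : (1:ℝ) ≤ |(i:ℝ) - j| := by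
        have : i ≠ j := hij
        have h5 : (1:ℝ) ≤ |(i:ℝ) - (j:ℝ)| := by
          rcases this.lt_or_gt with h | h
          · rw [abs_sub_comm]; rw [le_abs]; left
            have : (i:ℝ) + 1 ≤ j := by exact_mod_cast Nat.succ_le_of_lt h
            linarith
          · rw [le_abs]; left
            have : (j:ℝ) + 1 ≤ i := by exact_mod_cast Nat.succ_le_of_lt h
            linarith
        exact h5
      have h6 : |(i:ℝ)*D - (j:ℝ)*D| = |(i:ℝ) - j| * D := by
        rw [← sub_mul, abs_mul, abs_of_pos hD0]
      nlinarith
    -- volume of S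
    have hvolS : volume S = (N : ℝ≥0∞) * ENNReal.ofReal (δ^n) := by
      rw [hS, measure_biUnion_finset hdisj (fun j _ => (cube_closed n (c j) δ).measurableSet)]
      simp only [volume_cube, ← ENNReal.ofReal_pow hδ0.le]
      rw [Finset.sum_const, Finset.card_range, nsmul_eq_mul]
    have hvolS' : ENNReal.ofReal t < volume S := by
      rw [hvolS, ← ENNReal.ofReal_natCast, ← ENNReal.ofReal_mul (by positivity)]
      exact (ENNReal.ofReal_lt_ofReal_iff (by positivity)).mpr htN
    -- rearrangement bound
    have hrearr : ENNReal.ofReal M ≤ rearr n f t := by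
      apply le_sInf
      rintro σ ⟨hσ0, hσv⟩
      by_contra hlt
      push_neg at hlt
      have hsub : S ⊆ {x : En n | σ < ENNReal.ofReal ‖f x‖} := by
        intro y hy
        have : f y = M := by rw [hfdef]; simp [Set.indicator_of_mem hy]
        simp only [Set.mem_setOf_eq, this, Real.norm_eq_abs, abs_of_pos hM]
        exact lt_of_not_ge (fun h => absurd (lt_of_lt_of_le hlt h) (lt_irrefl σ))
      exact absurd (le_trans (measure_mono hsub) hσv) (not_le.mpr hvolS')
    -- Morrey norm bound
    have hnorm : morreyNorm n p φ f ≤ 1 := by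
      rw [morreyNorm]
      refine iSup_le fun x => iSup_le fun r => iSup_le fun hr => ?_
      have hφr : (0:ℝ) < φ r := hφ.1 r hr
      -- the integrand is an indicator
      have hintg : (fun y => ENNReal.ofReal (‖f y‖ ^ p)) =
          S.indicator (fun _ => ENNReal.ofReal (M ^ p)) := by
        funext y
        by_cases hy : y ∈ S
        · rw [hfdef]
          simp [Set.indicator_of_mem hy, Real.norm_eq_abs, abs_of_pos hM]
        · rw [hfdef]
          simp [Set.indicator_of_notMem hy, Real.zero_rpow hp.ne']
      have hint : (∫⁻ y in cube n x r, ENNReal.ofReal (‖f y‖ ^ p)) =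
          ENNReal.ofReal (M ^ p) * volume (S ∩ cube n x r) := by
        rw [hintg, lintegral_indicator hSm, Measure.restrict_restrict hSm, setLIntegral_const]
      -- the set of cubes meeting Q
      set J : Finset ℕ := (Finset.range N).filter
        (fun j => (cube n (c j) δ ∩ cube n x r).Nonempty) with hJ
      set k : ℝ := (J.card : ℝ) with hk
      have hk0 : (0:ℝ) ≤ k := Nat.cast_nonneg _
      set m : ℝ := min r δ with hm
      have hm0 : (0:ℝ) < m := lt_min hr hδ0
      -- volume of each intersection
      have hinter : ∀ j, volume (cube n (c j) δ ∩ cube n x r) ≤ ENNReal.ofReal (m ^ n) := by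
        intro j
        rcases le_total r δ with h | h
        · calc volume (cube n (c j) δ ∩ cube n x r) ≤ volume (cube n x r) :=
                measure_mono Set.inter_subset_right
            _ = ENNReal.ofReal (r ^ n) := by rw [volume_cube, ENNReal.ofReal_pow hr.le]
            _ = ENNReal.ofReal (m ^ n) := by rw [hm, min_eq_left h]
        · calc volume (cube n (c j) δ ∩ cube n x r) ≤ volume (cube n (c j) δ) :=
                measure_mono Set.inter_subset_left
            _ = ENNReal.ofReal (δ ^ n) := by rw [volume_cube, ENNReal.ofReal_pow hδ0.le]
            _ = ENNReal.ofReal (m ^ n) := by rw [hm, min_eq_right h]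
      -- volume of S ∩ Q
      have hSQ : volume (S ∩ cube n x r) ≤ ENNReal.ofReal (k * m ^ n) := by
        have h1 : S ∩ cube n x r = ⋃ j ∈ Finset.range N, (cube n (c j) δ ∩ cube n x r) := by
          rw [hS, Set.iUnion₂_inter]
        rw [h1]
        calc volume (⋃ j ∈ Finset.range N, (cube n (c j) δ ∩ cube n x r))
            ≤ ∑ j ∈ Finset.range N, volume (cube n (c j) δ ∩ cube n x r) :=
              measure_biUnion_finset_le _ _
          _ = ∑ j ∈ J, volume (cube n (c j) δ ∩ cube n x r) := by
              rw [hJ]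
              refine (Finset.sum_filter_of_ne fun j _ hne => ?_).symm
              by_contra hcon
              rw [Set.not_nonempty_iff_eq_empty] at hcon
              rw [hcon, measure_empty] at hne
              exact hne rfl
          _ ≤ ∑ _j ∈ J, ENNReal.ofReal (m ^ n) := Finset.sum_le_sum fun j _ => hinter j
          _ = (J.card : ℝ≥0∞) * ENNReal.ofReal (m ^ n) := by
              rw [Finset.sum_const, nsmul_eq_mul]
          _ = ENNReal.ofReal (k * m ^ n) := by
              rw [ENNReal.ofReal_mul hk0, ENNReal.ofReal_natCast]
      -- centers of cubes meeting Q are close to x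
      have hJloc : ∀ j ∈ J, |(j:ℝ)*D - x i0| ≤ (r + δ)/2 := by
        intro j hj
        rw [hJ, Finset.mem_filter] at hj
        obtain ⟨y, hy1, hy2⟩ := hj.2
        have h1 : |y i0 - (j:ℝ)*D| ≤ δ/2 := by have := hy1 i0; rwa [hci0] at this
        have h2 : |y i0 - x i0| ≤ r/2 := hy2 i0
        have := abs_sub_le ((j:ℝ)*D) (y i0) (x i0)
        rw [abs_sub_comm ((j:ℝ)*D) (y i0)] at this
        linarith
      -- cardinality bounds
      have hJcard : J.card ≤ N := by
        calc J.card ≤ (Finset.range N).card :=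
              Finset.card_le_card (by rw [hJ]; exact Finset.filter_subset _ _)
          _ = N := Finset.card_range N
      have hkN : k ≤ (N:ℝ) := by rw [hk]; exact_mod_cast hJcard
      have hkD : k ≤ (r + δ)/D + 1 := by
        rcases J.eq_empty_or_nonempty with hJe | hJne
        · rw [hk, hJe]; simp; positivity
        · set mn : ℕ := J.min' hJne with hmn
          have hmnJ : mn ∈ J := J.min'_mem hJne
          have hsub : J ⊆ Finset.Icc mn (mn + ⌊(r + δ)/D⌋₊) := by
            intro j hj
            rw [Finset.mem_Icc]
            refine ⟨J.min'_le j hj, ?_⟩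
            have h1 := hJloc j hj
            have h2 := hJloc mn hmnJ
            have h3 : (j:ℝ)*D - (mn:ℝ)*D ≤ r + δ := by
              have h4 := abs_sub_le ((j:ℝ)*D) (x i0) ((mn:ℝ)*D)
              have h5 := le_abs_self ((j:ℝ)*D - (mn:ℝ)*D)
              have h6 : |x i0 - (mn:ℝ)*D| = |(mn:ℝ)*D - x i0| := abs_sub_comm _ _
              linarith [h1, h2, h4, h5]
            have h5 : ((j - mn : ℕ) : ℝ) ≤ (r + δ)/D := by
              rw [Nat.cast_sub (J.min'_le j hj)]
              rw [le_div_iff₀ hD0]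
              calc ((j:ℝ) - mn) * D = (j:ℝ)*D - (mn:ℝ)*D := by ring
                _ ≤ r + δ := h3
            have h6 : j - mn ≤ ⌊(r + δ)/D⌋₊ := Nat.le_floor h5
            omega
          calc k ≤ ((Finset.Icc mn (mn + ⌊(r + δ)/D⌋₊)).card : ℝ) := by
                rw [hk]; exact_mod_cast Finset.card_le_card hsub
            _ = (⌊(r + δ)/D⌋₊ + 1 : ℕ) := by rw [Nat.card_Icc]; congr 1; omega
            _ ≤ (r + δ)/D + 1 := by
                push_cast
                have : (⌊(r + δ)/D⌋₊ : ℝ) ≤ (r + δ)/D := Nat.floor_le (by positivity)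
                linarith
      -- the key real inequality
      have hkey : (φ r) ^ p * (M ^ p * (k * m ^ n)) ≤ r ^ n := by
        rcases le_total r D with hrD | hDr
        · -- r ≤ D : at most 3 cubes
          have hk3 : k ≤ 3 := by
            have h1 : (r + δ)/D ≤ 2 := by
              rw [div_le_iff₀ hD0]; linarith
            linarith
          rcases le_total r δ with hrδ | hδr
          · -- r ≤ δ
            have hmr : m = r := min_eq_left hrδ
            have hmono : φ r ≤ φ δ := (hφ.2 r δ hr hrδ).1
            have h1 : (φ r) ^ p ≤ 1/(3 * M^p) :=
              le_trans (Real.rpow_le_rpow hφr.le hmono hp.le) hδp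
            have h2 : (φ r) ^ p * M ^ p * k ≤ 1 := by
              calc (φ r) ^ p * M ^ p * k ≤ (1/(3 * M^p)) * M ^ p * 3 := by
                    apply mul_le_mul _ hk3 hk0 (by positivity)
                    exact mul_le_mul_of_nonneg_right h1 hMp.le
                _ = 1 := by field_simp
            calc (φ r) ^ p * (M ^ p * (k * m ^ n)) = ((φ r) ^ p * M ^ p * k) * m ^ n := by ring
              _ ≤ 1 * m ^ n := by
                  apply mul_le_mul_of_nonneg_right h2 (by positivity)
              _ = r ^ n := by rw [one_mul, hmr]
          · -- δ ≤ r ≤ D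
            have hmδ : m = δ := min_eq_right hδr
            have hgrow : (φ r) ^ p ≤ (φ δ) ^ p * (r/δ)^n := by
              have h1 : φ r ≤ φ δ * (r/δ) ^ ((n:ℝ)/p) := (hφ.2 δ r hδ0 hδr).2
              have h2 : (φ r) ^ p ≤ (φ δ * (r/δ) ^ ((n:ℝ)/p)) ^ p :=
                Real.rpow_le_rpow hφr.le h1 hp.le
              have h3 : (φ δ * (r/δ) ^ ((n:ℝ)/p)) ^ p = (φ δ)^p * (r/δ)^n := by
                rw [Real.mul_rpow hφδ0.le (by positivity), ← Real.rpow_natCast (r/δ) n,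
                  ← Real.rpow_mul (by positivity), div_mul_cancel₀ _ hp.ne']
              rw [h3] at h2; exact h2
            have h4 : (φ δ)^p * (r/δ)^n * M^p * k * δ^n ≤ r^n := by
              have h5 : (r/δ)^n * δ^n = r^n := by
                rw [div_pow, div_mul_cancel₀]
                positivity
              have h6 : (φ δ)^p * M^p * k ≤ 1 := by
                calc (φ δ)^p * M^p * k ≤ (1/(3 * M^p)) * M^p * 3 := by
                      apply mul_le_mul _ hk3 hk0 (by positivity)
                      exact mul_le_mul_of_nonneg_right hδp hMp.le
                  _ = 1 := by field_simp
              calc (φ δ)^p * (r/δ)^n * M^p * k * δ^n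
                  = ((φ δ)^p * M^p * k) * ((r/δ)^n * δ^n) := by ring
                _ ≤ 1 * ((r/δ)^n * δ^n) := by
                    apply mul_le_mul_of_nonneg_right h6 (by positivity)
                _ = r^n := by rw [one_mul, h5]
            calc (φ r) ^ p * (M ^ p * (k * m ^ n))
                ≤ ((φ δ)^p * (r/δ)^n) * (M ^ p * (k * m ^ n)) := by
                  apply mul_le_mul_of_nonneg_right hgrow (by positivity)
              _ = (φ δ)^p * (r/δ)^n * M^p * k * δ^n := by rw [hmδ]; ring
              _ ≤ r^n := h4
        · -- D ≤ r : at most N cubes, use decay at infinity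
          have hrR : R ≤ r := le_trans hDR hDr
          have hφdecay : (φ r) ^ p ≤ (M^p * N * δ^n)⁻¹ * r^n := by
            have h1 : φ r / r ^ ((n:ℝ)/p) < ((M^p * N * δ^n)⁻¹) ^ (1/p) := hR r hrR
            have hrnp : (0:ℝ) < r ^ ((n:ℝ)/p) := Real.rpow_pos_of_pos hr _
            have h2 : φ r ≤ ((M^p * N * δ^n)⁻¹) ^ (1/p) * r ^ ((n:ℝ)/p) := by
              rw [div_lt_iff₀ hrnp] at h1
              linarith
            have h3 : (φ r) ^ p ≤ (((M^p * N * δ^n)⁻¹) ^ (1/p) * r ^ ((n:ℝ)/p)) ^ p :=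
              Real.rpow_le_rpow hφr.le h2 hp.le
            have h4 : (((M^p * N * δ^n)⁻¹) ^ (1/p) * r ^ ((n:ℝ)/p)) ^ p
                = (M^p * N * δ^n)⁻¹ * r^n := by
              rw [Real.mul_rpow (by positivity) (by positivity),
                ← Real.rpow_mul (by positivity), one_div_mul_cancel hp.ne', Real.rpow_one,
                ← Real.rpow_mul hr.le, div_mul_cancel₀ _ hp.ne', Real.rpow_natCast]
            rw [h4] at h3; exact h3
          have hmδ : m ≤ δ := min_le_right _ _
          calc (φ r) ^ p * (M ^ p * (k * m ^ n))
              ≤ ((M^p * N * δ^n)⁻¹ * r^n) * (M ^ p * ((N:ℝ) * δ ^ n)) := by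
                apply mul_le_mul hφdecay _ (by positivity) (by positivity)
                apply mul_le_mul_of_nonneg_left _ hMp.le
                apply mul_le_mul hkN (pow_le_pow_left₀ hm0.le hmδ n) (by positivity) (by positivity)
            _ = r ^ n := by field_simp
      -- assemble in ℝ≥0∞
      have hvolQ : volume (cube n x r) = ENNReal.ofReal (r^n) := by
        rw [volume_cube, ENNReal.ofReal_pow hr.le]
      have hrn0 : (0:ℝ) < r^n := by positivity
      calc ENNReal.ofReal (φ r) *
            ((volume (cube n x r))⁻¹ * ∫⁻ y in cube n x r, ENNReal.ofReal (‖f y‖ ^ p)) ^ (1 / p)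
          ≤ ENNReal.ofReal (φ r) *
            ((ENNReal.ofReal (r^n))⁻¹ * ENNReal.ofReal (M^p * (k * m^n))) ^ (1 / p) := by
            rw [hint, hvolQ]
            gcongr
            rw [ENNReal.ofReal_mul (by positivity)]
            exact mul_le_mul_right hSQ _
        _ = ENNReal.ofReal (φ r) * (ENNReal.ofReal ((M^p * (k * m^n)) / r^n)) ^ (1 / p) := by
            rw [ENNReal.ofReal_div_of_pos hrn0, ENNReal.div_eq_inv_mul]
        _ = ENNReal.ofReal (φ r * ((M^p * (k * m^n)) / r^n) ^ (1/p)) := by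
            rw [ENNReal.ofReal_rpow_of_nonneg (by positivity) (by positivity),
              ← ENNReal.ofReal_mul hφr.le]
        _ ≤ 1 := by
            rw [ENNReal.ofReal_le_one]
            set A : ℝ := (M^p * (k * m^n)) / r^n with hA
            have hA0 : 0 ≤ A := by positivity
            have hA1 : (φ r)^p * A ≤ 1 := by
              rw [hA, mul_div_assoc']
              rw [div_le_one hrn0]
              exact hkey
            have h1 : φ r * A ^ (1/p) = ((φ r)^p * A) ^ (1/p) := by
              rw [Real.mul_rpow (by positivity) hA0, ← Real.rpow_mul hφr.le,
                mul_one_div_cancel hp.ne', Real.rpow_one]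
            rw [h1]
            exact Real.rpow_le_one (by positivity) hA1 (by positivity)
    -- conclude
    calc ENNReal.ofReal M ≤ rearr n f t := hrearr
      _ ≤ morreyEnvelope n p φ t := by
          rw [morreyEnvelope]
          exact le_iSup_of_le f (le_iSup_of_le hf (le_iSup_of_le hnorm le_rfl))
  -- finish: envelope is unbounded hence ⊤
  by_contra hne
  have hlt : morreyEnvelope n p φ t < ⊤ := lt_top_iff_ne_top.mpr hne
  set E := morreyEnvelope n p φ t
  have h1 : ENNReal.ofReal (E.toReal + 1) ≤ E := key _ (by linarith [ENNReal.toReal_nonneg (a := E)])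
  have h2 : ENNReal.ofReal (E.toReal + 1) = E + 1 := by
    rw [ENNReal.ofReal_add ENNReal.toReal_nonneg zero_le_one, ENNReal.ofReal_toReal hne,
      ENNReal.ofReal_one]
  rw [h2] at h1
  exact absurd h1 (not_le.mpr (ENNReal.lt_add_right hne one_ne_zero))
end
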